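/- Let A ∈ ℝ^{m×n}, let Θ ∈ ℝ^{n×n} be diagonal with strictly positive diagonal entries, and let R_d ∈ ℝ^{m×m} be symmetric positive definite. Then every strictly negative eigenvalue μ of the symmetric matrix M = [[−Θ^{-1}, Aᵀ],[A, R_d]] satisfies μ ≤ −min_j (Θ^{-1})_{jj}. In particular the largest negative eigenvalue μ_{-1} of M satisfies μ_{-1} ≤ −min_j (Θ^{-1})_{jj}. -/

import Mathlib

open Matrix

/-- With `Θ` diagonal with positive diagonal entries and `R_d` symmetric positive
definite, every strictly negative eigenvalue `μ` of `M = [[−Θ⁻¹, Aᵀ],[A, R_d]]`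
satisfies `μ ≤ −min_j (Θ⁻¹)_jj`. -/
theorem stmt_9 {m n : ℕ} (A : Matrix (Fin m) (Fin n) ℝ)
    (d : Fin n → ℝ) (hd : ∀ j, 0 < d j)
    (Rd : Matrix (Fin m) (Fin m) ℝ) (hRd : Rd.PosDef)
    (M : Matrix (Fin n ⊕ Fin m) (Fin n ⊕ Fin m) ℝ)
    (hMdef : M = Matrix.fromBlocks (-(Matrix.diagonal d)⁻¹) Aᵀ A Rd) :
    ∀ μ : ℝ, μ < 0 →
      ∀ x : Fin n ⊕ Fin m → ℝ, x ≠ 0 → M.mulVec x = μ • x →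
      μ ≤ -(⨅ j, (Matrix.diagonal d)⁻¹ j j) := by
  have hdiag : (Matrix.diagonal d)⁻¹ = Matrix.diagonal (fun j => (d j)⁻¹) := by
    apply Matrix.inv_eq_right_inv
    rw [Matrix.diagonal_mul_diagonal, ← Matrix.diagonal_one]
    exact congrArg Matrix.diagonal (funext fun j => mul_inv_cancel₀ (hd j).ne')
  intro μ hμ x hx hMx
  by_contra hcon
  push_neg at hcon
  rcases isEmpty_or_nonempty (Fin n) with hn | hn
  · have h0 : (⨅ j, (Matrix.diagonal d)⁻¹ j j) = 0 := Real.iInf_of_isEmpty _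
    rw [h0, neg_zero] at hcon
    exact absurd hμ (not_lt.2 hcon.le)
  · set θ : ℝ := ⨅ j, (Matrix.diagonal d)⁻¹ j j with hθ
    have hθ' : θ = ⨅ j, (d j)⁻¹ := by simp [hθ, hdiag]
    have hθle : ∀ j, θ ≤ (d j)⁻¹ := by
      intro j
      rw [hθ']
      exact ciInf_le (Set.Finite.bddBelow (Set.finite_range _)) j
    set u : Fin n → ℝ := fun i => x (Sum.inl i) with hu
    set v : Fin m → ℝ := fun i => x (Sum.inr i) with hv
    have hxelim : x = Sum.elim u v := by
      funext i; cases i <;> rfl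
    rw [hMdef, hxelim, Matrix.fromBlocks_mulVec] at hMx
    have h1 : -(Matrix.diagonal d)⁻¹ *ᵥ u + Aᵀ *ᵥ v = μ • u := by
      funext i
      have := congrFun hMx (Sum.inl i)
      simpa using this
    have h2 : A *ᵥ u + Rd *ᵥ v = μ • v := by
      funext i
      have := congrFun hMx (Sum.inr i)
      simpa using this
    -- dot products
    have e1 : u ⬝ᵥ (-(Matrix.diagonal d)⁻¹ *ᵥ u) + u ⬝ᵥ (Aᵀ *ᵥ v) = μ * (u ⬝ᵥ u) := by
      rw [← dotProduct_add, h1, dotProduct_smul, smul_eq_mul]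
    have e2 : v ⬝ᵥ (A *ᵥ u) + v ⬝ᵥ (Rd *ᵥ v) = μ * (v ⬝ᵥ v) := by
      rw [← dotProduct_add, h2, dotProduct_smul, smul_eq_mul]
    have ecross : u ⬝ᵥ (Aᵀ *ᵥ v) = v ⬝ᵥ (A *ᵥ u) := by
      rw [Matrix.dotProduct_mulVec, Matrix.vecMul_transpose, dotProduct_comm]
    have hdval : u ⬝ᵥ ((Matrix.diagonal d)⁻¹ *ᵥ u) = ∑ j, (d j)⁻¹ * (u j * u j) := by
      rw [hdiag]
      simp [dotProduct, Matrix.mulVec_diagonal, mul_comm, mul_left_comm]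
    -- key identity: μ * (v⬝v) = v⬝Rd v + μ*(u⬝u) + Σ θj uj²
    have key : μ * (v ⬝ᵥ v) = v ⬝ᵥ (Rd *ᵥ v) + μ * (u ⬝ᵥ u) + ∑ j, (d j)⁻¹ * (u j * u j) := by
      have e1' : u ⬝ᵥ (Aᵀ *ᵥ v) = μ * (u ⬝ᵥ u) + ∑ j, (d j)⁻¹ * (u j * u j) := by
        have : -(u ⬝ᵥ ((Matrix.diagonal d)⁻¹ *ᵥ u)) + u ⬝ᵥ (Aᵀ *ᵥ v) = μ * (u ⬝ᵥ u) := by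
          simpa [Matrix.neg_mulVec] using e1
        rw [hdval] at this
        linarith
      rw [← e2, ← ecross, e1']
      ring
    have hsum_ge : ∑ j, (d j)⁻¹ * (u j * u j) ≥ θ * (u ⬝ᵥ u) := by
      rw [dotProduct, Finset.mul_sum]
      apply Finset.sum_le_sum
      intro j _
      exact mul_le_mul_of_nonneg_right (hθle j) (mul_self_nonneg _)
    have hRdnn : 0 ≤ v ⬝ᵥ (Rd *ᵥ v) := hRd.posSemidef.dotProduct_mulVec_nonneg v
    have huu : 0 ≤ u ⬝ᵥ u := Finset.sum_nonneg fun j _ => mul_self_nonneg _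
    have hvv : 0 ≤ v ⬝ᵥ v := Finset.sum_nonneg fun j _ => mul_self_nonneg _
    have hμθ : 0 < μ + θ := by linarith
    -- μ (v⬝v) ≥ v⬝Rdv + (μ+θ)(u⬝u) ≥ 0, and μ<0 forces v⬝v = 0 then u⬝u ≤ 0
    have hge : μ * (v ⬝ᵥ v) ≥ v ⬝ᵥ (Rd *ᵥ v) + (μ + θ) * (u ⬝ᵥ u) := by
      rw [key]; nlinarith
    have hle0 : μ * (v ⬝ᵥ v) ≤ 0 := mul_nonpos_of_nonpos_of_nonneg hμ.le hvv
    have huu0 : u ⬝ᵥ u ≤ 0 := by nlinarith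
    have hvv0 : v ⬝ᵥ v ≤ 0 := by nlinarith
    have hu0 : u = 0 := dotProduct_self_eq_zero.mp (le_antisymm huu0 huu)
    have hv0 : v = 0 := dotProduct_self_eq_zero.mp (le_antisymm hvv0 hvv)
    apply hx
    rw [hxelim, hu0, hv0]
    funext i; cases i <;> rfl
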